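/- Let Ω₁(t), Ω₂(t) be differentiable real-valued functions with Ω₁² + Ω₂² > 0, let G₁, G₂ ∈ ℝ, and set θ_a = -arctan(G₂Ω₂/(Ω₁ + G₁Ω₂)) and θ_b = -arctan(G₂Ω₁/(G₁Ω₁ - Ω₂)) (interpreted via the argument of the corresponding complex numbers Ω₁ + (G₁+iG₂)Ω₂ and -Ω₂ + (G₁+iG₂)Ω₁). With weights w_a = ((Ω₁+G₁Ω₂)² + G₂²Ω₂²)/((1+G₁²+G₂²)(Ω₁²+Ω₂²)) and w_b = ((G₁Ω₁-Ω₂)² + G₂²Ω₁²)/((1+G₁²+G₂²)(Ω₁²+Ω₂²)), the weighted derivative satisfies w_a θ_a' + w_b θ_b' = 2G₂(Ω₁'Ω₂ - Ω₁Ω₂')/((1+G₁²+G₂²)(Ω₁²+Ω₂²)). -/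

import Mathlib

lemma deriv_neg_arctan_div (N D : ℝ → ℝ) (n d t : ℝ)
    (hN : HasDerivAt N n t) (hD : HasDerivAt D d t) (hDt : D t ≠ 0) :
    deriv (fun s => -Real.arctan (N s / D s)) t
      = -((n * D t - N t * d) / ((D t) ^ 2 + (N t) ^ 2)) := by
  have hq := hN.div hD hDt
  have ha := (Real.hasDerivAt_arctan (N t / D t)).comp t hq
  have hn : HasDerivAt (fun s => -Real.arctan (N s / D s))
      (-(1 / (1 + (N t / D t) ^ 2) * ((n * D t - N t * d) / D t ^ 2))) t := ha.neg
  rw [hn.deriv]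
  have h1q : (1:ℝ) + (N t / D t) ^ 2 ≠ 0 := by positivity
  field_simp

/-- The probability-weighted combination of the derivatives of the two phases
`θ_a = -arctan(G₂Ω₂/(Ω₁ + G₁Ω₂))` and `θ_b = -arctan(G₂Ω₁/(G₁Ω₁ - Ω₂))` equals
`2G₂(Ω₁'Ω₂ - Ω₁Ω₂') / ((1+G₁²+G₂²)(Ω₁²+Ω₂²))`. -/
theorem weighted_phase_derivative (Ω₁ Ω₂ : ℝ → ℝ) (G₁ G₂ t : ℝ)
    (h1 : DifferentiableAt ℝ Ω₁ t) (h2 : DifferentiableAt ℝ Ω₂ t)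
    (hpos : 0 < Ω₁ t ^ 2 + Ω₂ t ^ 2)
    (hda : Ω₁ t + G₁ * Ω₂ t ≠ 0) (hdb : G₁ * Ω₁ t - Ω₂ t ≠ 0) :
    let θa : ℝ → ℝ := fun s => -Real.arctan (G₂ * Ω₂ s / (Ω₁ s + G₁ * Ω₂ s))
    let θb : ℝ → ℝ := fun s => -Real.arctan (G₂ * Ω₁ s / (G₁ * Ω₁ s - Ω₂ s))
    let wa : ℝ := ((Ω₁ t + G₁ * Ω₂ t) ^ 2 + G₂ ^ 2 * Ω₂ t ^ 2) /
      ((1 + G₁ ^ 2 + G₂ ^ 2) * (Ω₁ t ^ 2 + Ω₂ t ^ 2))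
    let wb : ℝ := ((G₁ * Ω₁ t - Ω₂ t) ^ 2 + G₂ ^ 2 * Ω₁ t ^ 2) /
      ((1 + G₁ ^ 2 + G₂ ^ 2) * (Ω₁ t ^ 2 + Ω₂ t ^ 2))
    wa * deriv θa t + wb * deriv θb t
      = 2 * G₂ * (deriv Ω₁ t * Ω₂ t - Ω₁ t * deriv Ω₂ t) /
        ((1 + G₁ ^ 2 + G₂ ^ 2) * (Ω₁ t ^ 2 + Ω₂ t ^ 2)) := by
  intro θa θb wa wb
  have hNa : HasDerivAt (fun s => G₂ * Ω₂ s) (G₂ * deriv Ω₂ t) t :=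
    h2.hasDerivAt.const_mul G₂
  have hDa : HasDerivAt (fun s => Ω₁ s + G₁ * Ω₂ s)
      (deriv Ω₁ t + G₁ * deriv Ω₂ t) t :=
    h1.hasDerivAt.add (h2.hasDerivAt.const_mul G₁)
  have hNb : HasDerivAt (fun s => G₂ * Ω₁ s) (G₂ * deriv Ω₁ t) t :=
    h1.hasDerivAt.const_mul G₂
  have hDb : HasDerivAt (fun s => G₁ * Ω₁ s - Ω₂ s)
      (G₁ * deriv Ω₁ t - deriv Ω₂ t) t :=
    (h1.hasDerivAt.const_mul G₁).sub h2.hasDerivAt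
  have ea := deriv_neg_arctan_div _ _ _ _ t hNa hDa hda
  have eb := deriv_neg_arctan_div _ _ _ _ t hNb hDb hdb
  show wa * deriv θa t + wb * deriv θb t = _
  rw [show deriv θa t = _ from ea, show deriv θb t = _ from eb]
  simp only [wa, wb]
  have hsa : (Ω₁ t + G₁ * Ω₂ t) ^ 2 + (G₂ * Ω₂ t) ^ 2 ≠ 0 := by positivity
  have hsb : (G₁ * Ω₁ t - Ω₂ t) ^ 2 + (G₂ * Ω₁ t) ^ 2 ≠ 0 := by positivity
  have hK : (1 + G₁ ^ 2 + G₂ ^ 2) * (Ω₁ t ^ 2 + Ω₂ t ^ 2) ≠ 0 := by positivity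
  have key : ∀ S X K : ℝ, S ≠ 0 → S / K * -(X / S) = -X / K := by
    intro S X K hS
    rw [mul_neg, div_mul_div_comm, mul_comm S X, mul_div_mul_right _ _ hS, neg_div]
  rw [show G₂ ^ 2 * Ω₂ t ^ 2 = (G₂ * Ω₂ t) ^ 2 by ring,
    show G₂ ^ 2 * Ω₁ t ^ 2 = (G₂ * Ω₁ t) ^ 2 by ring, key _ _ _ hsa, key _ _ _ hsb]
  ring
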